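/- A positive integer n is representable as n = x² + xy + y² + 16z² with x, y, z ∈ Z_2 (the 2-adic integers) if and only if n is not of the form 2 + 4ℓ and not of the form 8 + 16ℓ for a nonnegative integer ℓ. -/
import Mathlib

open Polynomial

lemma hensel_tsq (u : ℤ_[2]) (h : ‖u - 1‖ < 1) : ∃ t : ℤ_[2], t ^ 2 + t + 1 = u := by
  set F : Polynomial ℤ_[2] := X ^ 2 + X + C (1 - u) with hF
  have heval : F.eval 0 = 1 - u := by simp [hF]
  have hderiv : F.derivative.eval 0 = 1 := by simp [hF]
  have hnorm : ‖F.eval 0‖ < ‖F.derivative.eval 0‖ ^ 2 := by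
    rw [heval, hderiv]; simpa [norm_sub_rev] using h
  obtain ⟨t, ht, -⟩ := hensels_lemma hnorm
  refine ⟨t, ?_⟩
  have : t ^ 2 + t + (1 - u) = 0 := by simpa [hF] using ht
  linear_combination this

lemma odd_repr (m : ℕ) (hm : m % 2 = 1) : ∃ t : ℤ_[2], t ^ 2 + t + 1 = (m : ℤ_[2]) := by
  apply hensel_tsq
  rw [PadicInt.norm_lt_one_iff_dvd]
  obtain ⟨k, hk⟩ : ∃ k, m = 2 * k + 1 := ⟨m / 2, by omega⟩
  exact ⟨(k : ℤ_[2]), by push_cast [hk]; ring⟩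

lemma zmod16 : ∀ a b : ZMod 16, a ^ 2 + a * b + b ^ 2 ≠ 2 ∧ a ^ 2 + a * b + b ^ 2 ≠ 6 ∧
    a ^ 2 + a * b + b ^ 2 ≠ 10 ∧ a ^ 2 + a * b + b ^ 2 ≠ 14 ∧ a ^ 2 + a * b + b ^ 2 ≠ 8 := by
  decide

theorem repr_xx_xy_yy_16zz_over_Z2 (n : ℕ) (hn : 0 < n) :
    (∃ x y z : ℤ_[2], (n : ℤ_[2]) = x ^ 2 + x * y + y ^ 2 + 16 * z ^ 2) ↔
      (¬ ∃ ℓ : ℕ, n = 2 + 4 * ℓ) ∧ (¬ ∃ ℓ : ℕ, n = 8 + 16 * ℓ) := by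
  constructor
  · rintro ⟨x, y, z, h⟩
    set φ : ℤ_[2] →+* ZMod 16 := PadicInt.toZModPow 4 with hφ
    have h16 : (n : ZMod 16) = (φ x) ^ 2 + (φ x) * (φ y) + (φ y) ^ 2 := by
      have hc := congrArg φ h
      rw [map_natCast] at hc
      rw [hc]
      simp only [map_add, map_mul, map_pow, map_ofNat]
      have h0 : (16 : ZMod 16) = 0 := by decide
      rw [h0]; ring
    have key : ∀ r : ZMod 16, r = 2 ∨ r = 6 ∨ r = 10 ∨ r = 14 ∨ r = 8 →
        (n : ZMod 16) ≠ r := by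
      intro r hr hc
      obtain ⟨h1, h2, h3, h4, h5⟩ := zmod16 (φ x) (φ y)
      rcases hr with h | h | h | h | h <;> rw [h] at hc <;>
        [exact h1 (h16 ▸ hc); exact h2 (h16 ▸ hc); exact h3 (h16 ▸ hc);
         exact h4 (h16 ▸ hc); exact h5 (h16 ▸ hc)]
    have hcast : (n : ZMod 16) = ((n % 16 : ℕ) : ZMod 16) := (ZMod.natCast_mod n 16).symm
    constructor
    · rintro ⟨ℓ, rfl⟩
      have : (2 + 4 * ℓ) % 16 = 2 ∨ (2 + 4 * ℓ) % 16 = 6 ∨ (2 + 4 * ℓ) % 16 = 10 ∨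
          (2 + 4 * ℓ) % 16 = 14 := by omega
      rcases this with h | h | h | h <;> rw [h] at hcast <;>
        [exact key 2 (by tauto) (by rw [hcast]; norm_num);
         exact key 6 (by tauto) (by rw [hcast]; norm_num);
         exact key 10 (by tauto) (by rw [hcast]; norm_num);
         exact key 14 (by tauto) (by rw [hcast]; norm_num)]
    · rintro ⟨ℓ, rfl⟩
      have h : (8 + 16 * ℓ) % 16 = 8 := by omega
      rw [h] at hcast
      exact key 8 (by tauto) (by rw [hcast]; norm_num)
  · rintro ⟨h2, h8⟩
    obtain ⟨e, m, hnm, hmodd⟩ : ∃ e m, n = 2 ^ e * m ∧ m % 2 = 1 := by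
      refine ⟨n.factorization 2, n / 2 ^ n.factorization 2,
        (Nat.ordProj_mul_ordCompl_eq_self n 2).symm, ?_⟩
      have := Nat.not_dvd_ordCompl (by norm_num : Nat.Prime 2) hn.ne'
      omega
    have he1 : e ≠ 1 := by
      rintro rfl
      norm_num at hnm
      exact h2 ⟨m / 2, by omega⟩
    have he3 : e ≠ 3 := by
      rintro rfl
      norm_num at hnm
      exact h8 ⟨m / 2, by omega⟩
    rcases Nat.even_or_odd e with ⟨k, hk⟩ | ⟨k, hk⟩
    · obtain ⟨t, ht⟩ := odd_repr m hmodd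
      refine ⟨2 ^ k * t, 2 ^ k, 0, ?_⟩
      have hq : (n : ℤ_[2]) = (2 : ℤ_[2]) ^ (k + k) * m := by
        rw [hnm, hk]; push_cast; ring
      rw [hq, ← ht]; ring
    · have hk2 : 2 ≤ k := by omega
      set w := 2 ^ (2 * k - 3) * m - 1 with hw
      have hd : 2 ∣ 2 ^ (2 * k - 3) * m :=
        Dvd.dvd.mul_right (dvd_pow_self 2 (by omega)) m
      have h1 : 1 ≤ 2 ^ (2 * k - 3) * m :=
        Nat.one_le_iff_ne_zero.mpr (Nat.mul_ne_zero (by positivity) (by omega))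
      have hwodd : w % 2 = 1 := by omega
      obtain ⟨t, ht⟩ := odd_repr w hwodd
      refine ⟨4 * t, 4, 1, ?_⟩
      have hPm : n = 16 * (2 ^ (2 * k - 3) * m) := by
        rw [hnm, hk]
        have hsplit : 2 * k + 1 = 4 + (2 * k - 3) := by omega
        rw [hsplit, pow_add, mul_assoc]
        norm_num
      have hnat : n = 16 * w + 16 := by omega
      have hnw : (n : ℤ_[2]) = 16 * (w : ℤ_[2]) + 16 := by
        rw [hnat]; push_cast; ring
      rw [hnw, ← ht]; ring
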